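/- Let T be a finite abelian group and let β : T × T → ℂˣ be a ℂ-valued alternating bicharacter whose radical is trivial. Then for every u ∈ T and every natural number p ≥ 0: the coset u·T_{[2^p]} is a square in the quotient group T/T_{[2^p]} if and only if β(u, v^{2^p}) = 1 for all v ∈ T_{[2^{p+1}]}. -/

import Mathlib

/-- A ℂ-valued alternating bicharacter on a (multiplicative) finite abelian group. -/
def IsAltBicharC {T : Type*} [CommGroup T] (β : T → T → ℂˣ) : Prop :=
  (∀ u v w : T, β (u * v) w = β u w * β v w) ∧
  (∀ u v w : T, β u (v * w) = β u v * β u w) ∧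
  (∀ u : T, β u u = 1)

private lemma aux_exists_char {G : Type*} [CommGroup G] [Finite G] {a : G} (ha : a ≠ 1) :
    ∃ φ : G →* ℂˣ, φ a ≠ 1 := by
  have : NeZero ((Monoid.exponent G : ℂ)) :=
    ⟨Nat.cast_ne_zero.mpr Monoid.exponent_ne_zero_of_finite⟩
  exact CommGroup.exists_apply_ne_one_of_hasEnoughRootsOfUnity G ℂ ha

private lemma aux_card_char (G : Type*) [CommGroup G] [Finite G] :
    Nonempty ((G →* ℂˣ) ≃* G) := by
  have : NeZero ((Monoid.exponent G : ℂ)) :=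
    ⟨Nat.cast_ne_zero.mpr Monoid.exponent_ne_zero_of_finite⟩
  exact CommGroup.monoidHom_mulEquiv_of_hasEnoughRootsOfUnity G ℂ

theorem stmt16 {T : Type*} [CommGroup T] [Fintype T]
    (β : T → T → ℂˣ) (hβ : IsAltBicharC β)
    (hrad : ∀ t : T, (∀ u : T, β u t = 1) → t = 1)
    (u : T) (p : ℕ)
    (K : Subgroup T) (hKdef : ∀ t : T, t ∈ K ↔ t ^ (2 ^ p) = 1) :
    (∃ w : T ⧸ K, w ^ 2 = QuotientGroup.mk u) ↔
      (∀ v : T, v ^ (2 ^ (p + 1)) = 1 → β u (v ^ (2 ^ p)) = 1) := by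
  obtain ⟨hml, hmr, halt⟩ := hβ
  -- left character β(·, t)
  let χ : T → (T →* ℂˣ) := fun t => MonoidHom.mk' (fun x => β x t) (fun a b => hml a b t)
  have hχ : ∀ t x, χ t x = β x t := fun _ _ => rfl
  -- basic consequences
  have h1r : ∀ x : T, β x 1 = 1 := by
    intro x
    have := hmr x 1 1
    rw [one_mul] at this
    exact (left_eq_mul.mp this)
  have hpr : ∀ (x t : T) (n : ℕ), β x (t ^ n) = (β x t) ^ n := by
    intro x t n
    induction n with
    | zero => simpa using h1r x
    | succ n ih => rw [pow_succ, pow_succ, hmr, ih]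
  have hpl : ∀ (x t : T) (n : ℕ), β (x ^ n) t = (β x t) ^ n := fun x t n => by
    simpa [hχ] using map_pow (χ t) x n
  have h1l : ∀ t : T, β 1 t = 1 := fun t => map_one (χ t)
  have hir : ∀ (x t : T), β x t⁻¹ = (β x t)⁻¹ := by
    intro x t
    have := hmr x t t⁻¹
    rw [mul_inv_cancel, h1r] at this
    exact (eq_inv_of_mul_eq_one_right this.symm)
  -- the pairing homomorphism Φ : T →* (T →* ℂˣ)
  let Φ : T →* (T →* ℂˣ) := MonoidHom.mk' χ (fun a b => by
    ext x
    exact congrArg Units.val (hmr x a b))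
  have hΦinj : Function.Injective Φ := by
    refine (injective_iff_map_eq_one Φ).mpr fun t ht => hrad t fun x => ?_
    have := congrArg (fun f : T →* ℂˣ => f x) ht
    simpa [Φ, hχ] using this
  have hΦsurj : Function.Surjective Φ := by
    obtain ⟨e⟩ := aux_card_char T
    have : Finite (T →* ℂˣ) := Finite.of_equiv T e.symm.toEquiv
    have hbij : Function.Bijective (e ∘ Φ) :=
      Finite.injective_iff_bijective.mp (e.injective.comp hΦinj)
    intro ψ
    obtain ⟨t, ht⟩ := hbij.surjective (e ψ)
    exact ⟨t, e.injective ht⟩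
  constructor
  · rintro ⟨w, hw⟩ v hv
    obtain ⟨a, rfl⟩ := QuotientGroup.mk_surjective w
    have hmk : (QuotientGroup.mk (a ^ 2) : T ⧸ K) = QuotientGroup.mk u := by
      rw [← hw]
      exact (map_pow (QuotientGroup.mk' K) a 2)
    have hk : (a ^ 2)⁻¹ * u ∈ K := QuotientGroup.eq.mp hmk
    have hu : u = a ^ 2 * ((a ^ 2)⁻¹ * u) := by group
    rw [hu, hml]
    have h1 : β (a ^ 2) (v ^ 2 ^ p) = 1 := by
      have : β (a ^ 2) (v ^ 2 ^ p) = β a (v ^ 2 ^ (p + 1)) := by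
        rw [hpl, hpr, hpr, ← pow_mul, pow_succ]
      rw [this, hv, h1r]
    have h2 : β ((a ^ 2)⁻¹ * u) (v ^ 2 ^ p) = 1 := by
      rw [hpr, ← hpl, (hKdef _).mp hk, h1l]
    rw [h1, h2, one_mul]
  · intro hcond
    -- subgroup of squares times K
    set H : Subgroup T := (powMonoidHom 2 : T →* T).range ⊔ K with hH
    -- annihilator of K
    let A : Subgroup T :=
      { carrier := {t | ∀ k ∈ K, β k t = 1}
        one_mem' := fun {k} hk => h1r k
        mul_mem' := fun {a b} ha hb k hk => by rw [hmr, ha k hk, hb k hk, one_mul]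
        inv_mem' := fun {a} ha k hk => by rw [hir, ha k hk, inv_one] }
    have hAmem : ∀ t : T, t ∈ A ↔ ∀ k ∈ K, β k t = 1 := fun _ => Iff.rfl
    -- the image of the 2^p power map
    set R : Subgroup T := (powMonoidHom (2 ^ p) : T →* T).range with hR
    have hker : (powMonoidHom (2 ^ p) : T →* T).ker = K := by
      ext t
      simp [MonoidHom.mem_ker, powMonoidHom_apply, hKdef]
    have hcardR : Nat.card R = Nat.card (T ⧸ K) := by
      rw [← hker]
      exact (Nat.card_congr (QuotientGroup.quotientKerEquivRange
        (powMonoidHom (2 ^ p) : T →* T)).toEquiv).symm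
    have hRA : R ≤ A := by
      rintro t ⟨s, rfl⟩ k hk
      show β k (s ^ 2 ^ p) = 1
      rw [hpr, ← hpl, (hKdef k).mp hk, h1l]
    -- cardinality bound for A via characters of the quotient
    have hcardA : Nat.card A ≤ Nat.card (T ⧸ K) := by
      have hlift : ∀ t : A, ∀ k ∈ K, (χ (t : T)) k = 1 := fun t k hk => t.2 k hk
      let F : A → ((T ⧸ K) →* ℂˣ) := fun t => QuotientGroup.lift K (χ (t : T)) (hlift t)
      have hFinj : Function.Injective F := by
        intro t₁ t₂ h
        have hx : ∀ x : T, β x (t₁ : T) = β x (t₂ : T) := by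
          intro x
          have := congrArg (fun f : (T ⧸ K) →* ℂˣ => f (QuotientGroup.mk x)) h
          exact this
        have : Φ (t₁ : T) = Φ (t₂ : T) := by
          ext x
          exact congrArg Units.val (hx x)
        exact Subtype.ext (hΦinj this)
      obtain ⟨e⟩ := aux_card_char (T ⧸ K)
      calc Nat.card A ≤ Nat.card ((T ⧸ K) →* ℂˣ) := by
            have : Finite ((T ⧸ K) →* ℂˣ) := Finite.of_equiv _ e.symm.toEquiv
            exact Nat.card_le_card_of_injective F hFinj
        _ = Nat.card (T ⧸ K) := Nat.card_congr e.toEquiv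
    have hAR : R = A := Subgroup.eq_of_le_of_card_ge hRA (hcardA.trans hcardR.ge)
    -- main claim: u ∈ H
    have huH : u ∈ H := by
      by_contra hu
      have hne : (QuotientGroup.mk u : T ⧸ H) ≠ 1 := by
        simpa [QuotientGroup.eq_one_iff] using hu
      obtain ⟨χ₀, hχ₀⟩ := aux_exists_char hne
      set ψ : T →* ℂˣ := χ₀.comp (QuotientGroup.mk' H) with hψ
      have hψH : ∀ x ∈ H, ψ x = 1 := by
        intro x hx
        simp [hψ, MonoidHom.comp_apply, (QuotientGroup.eq_one_iff x).mpr hx]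
      obtain ⟨t, ht⟩ := hΦsurj ψ
      have htx : ∀ x : T, β x t = ψ x := by
        intro x
        have := congrArg (fun f : T →* ℂˣ => f x) ht
        simpa [Φ, hχ] using this
      have ht2 : t ^ 2 = 1 := by
        refine hrad _ fun x => ?_
        rw [hpr, htx, ← map_pow]
        exact hψH (x ^ 2) (Subgroup.mem_sup_left ⟨x, rfl⟩)
      have htA : t ∈ A := fun k hk => by
        rw [htx]
        exact hψH k (Subgroup.mem_sup_right hk)
      obtain ⟨s, hs⟩ : t ∈ R := hAR ▸ htA
      have hs' : s ^ 2 ^ p = t := hs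
      have hsord : s ^ 2 ^ (p + 1) = 1 := by
        rw [pow_succ, pow_mul, hs', ht2]
      have : β u t = 1 := by rw [← hs']; exact hcond s hsord
      rw [htx] at this
      exact hχ₀ this
    -- extract the square root
    rw [hH, Subgroup.mem_sup] at huH
    obtain ⟨y, ⟨a, rfl⟩, z, hz, hyz⟩ := huH
    refine ⟨QuotientGroup.mk a, ?_⟩
    have hq : (QuotientGroup.mk a : T ⧸ K) ^ 2 = (QuotientGroup.mk (a ^ 2) : T ⧸ K) :=
      (map_pow (QuotientGroup.mk' K) a 2).symm
    rw [hq, QuotientGroup.eq]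
    have : (powMonoidHom 2) a = a ^ 2 := rfl
    rw [this] at hyz
    have : (a ^ 2)⁻¹ * u = z := by rw [← hyz]; group
    rw [this]
    exact hz
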